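/- Let R be a ring satisfying (SR_r), n ≥ r, and let x, y ∈ R^n be unimodular with R^n = C ⊕ x·R = D ⊕ y·R for submodules C, D ⊆ R^n. Let q be a two-sided ideal of R and suppose x and y have the same image in (R/q)^n and C and D have the same image in (R/q)^n. Then there exists M ∈ EL_n(R, q) with M·x = y and M·C = D. -/

import Mathlib

open Matrix

/-- A vector `v ∈ Rⁿ` is *unimodular* if some homomorphism of right `R`-modules
`φ : Rⁿ → R` sends it to `1`.  Right `R`-modules are encoded as modules over `Rᵐᵒᵖ`. -/
def IsUnimodular {n : ℕ} (R : Type) [Ring R] (v : Fin n → R) : Prop :=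
  ∃ φ : (Fin n → R) →ₗ[Rᵐᵒᵖ] R, φ v = 1

/-- Bass's stable rank condition `(SR_r)`: for all `n ≥ r` and every unimodular
`(c₁, …, cₙ) ∈ Rⁿ` there are `b₁, …, b_{n-1} ∈ R` such that
`(c₁ + b₁ cₙ, …, c_{n-1} + b_{n-1} cₙ)` is unimodular. -/
def SatisfiesSR (R : Type) [Ring R] (r : ℕ) : Prop :=
  ∀ n : ℕ, r ≤ n + 1 → ∀ c : Fin (n + 1) → R, IsUnimodular R c →
    ∃ b : Fin n → R,
      IsUnimodular R (fun i : Fin n => c i.castSucc + b i * c (Fin.last n))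

/-- An elementary matrix differs from the identity at exactly one off-diagonal entry. -/
def IsElementaryMatrix {R : Type} [Ring R] {n : ℕ} (A : Matrix (Fin n) (Fin n) R) : Prop :=
  ∃ i j : Fin n, i ≠ j ∧ ∃ x : R, A = 1 + Matrix.single i j x

/-- `EL_n(R)`: the subgroup of `GL_n(R)` generated by the elementary matrices. -/
def ElementarySubgroup (R : Type) [Ring R] (n : ℕ) : Subgroup ((Matrix (Fin n) (Fin n) R)ˣ) :=
  Subgroup.closure {M : (Matrix (Fin n) (Fin n) R)ˣ | IsElementaryMatrix M.val}

/-- An elementary matrix whose single off-diagonal entry lies in the two-sided ideal `q`. -/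
def IsQElementaryMatrix {R : Type} [Ring R] (q : TwoSidedIdeal R) {n : ℕ}
    (A : Matrix (Fin n) (Fin n) R) : Prop :=
  ∃ i j : Fin n, i ≠ j ∧ ∃ x : R, x ∈ q ∧ A = 1 + Matrix.single i j x

/-- `EL_n(R, q)`: the subgroup of `EL_n(R)` normally generated (in `EL_n(R)`) by the
elementary matrices whose off-diagonal entry lies in `q`; equivalently, the subgroup
generated by all `EL_n(R)`-conjugates of such elementary matrices. -/
def CongruenceElementarySubgroup (R : Type) [Ring R] (n : ℕ) (q : TwoSidedIdeal R) :
    Subgroup (Matrix (Fin n) (Fin n) R)ˣ :=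
  Subgroup.closure {g : (Matrix (Fin n) (Fin n) R)ˣ |
    ∃ e : (Matrix (Fin n) (Fin n) R)ˣ, IsQElementaryMatrix q e.val ∧
      ∃ h ∈ ElementarySubgroup R n, g = h * e * h⁻¹}

open Matrix Finset

namespace BassAux

variable {R : Type} [Ring R] {n : ℕ}

lemma quot_eq_iff (q : TwoSidedIdeal R) (a b : R) :
    (a : q.ringCon.Quotient) = b ↔ a - b ∈ q := by
  rw [← TwoSidedIdeal.rel_iff]
  exact ⟨fun h => Quotient.eq''.mp h, fun h => Quotient.sound' h⟩

lemma op_smul_eq (c : Rᵐᵒᵖ) (r : R) : c • r = r * c.unop := rfl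

lemma pi_single_op_smul (i : Fin n) (c : R) :
    Pi.single i c = (MulOpposite.op c) • (Pi.single i (1 : R) : Fin n → R) := by
  funext j
  by_cases h : j = i <;> simp [Pi.single_apply, h, op_smul_eq]

lemma lin_expand (φ : (Fin n → R) →ₗ[Rᵐᵒᵖ] R) (v : Fin n → R) :
    φ v = ∑ i, φ (Pi.single i 1) * v i := by
  conv_lhs => rw [← Finset.univ_sum_single v]
  rw [map_sum]
  refine Finset.sum_congr rfl fun i _ => ?_
  rw [pi_single_op_smul, LinearMap.map_smul, op_smul_eq, MulOpposite.unop_op]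

lemma unimodular_iff (v : Fin n → R) :
    IsUnimodular R v ↔ ∃ a : Fin n → R, ∑ i, a i * v i = 1 := by
  constructor
  · rintro ⟨φ, hφ⟩
    exact ⟨fun i => φ (Pi.single i 1), by rw [← lin_expand, hφ]⟩
  · rintro ⟨a, ha⟩
    refine ⟨⟨⟨fun w => ∑ i, a i * w i, fun w₁ w₂ => ?_⟩, fun c w => ?_⟩, ha⟩
    · simp [mul_add, Finset.sum_add_distrib]
    · simp only [RingHom.id_apply]
      rw [op_smul_eq, Finset.sum_mul]
      refine Finset.sum_congr rfl fun i _ => ?_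
      rw [Pi.smul_apply, op_smul_eq, mul_assoc]


end BassAux

namespace BassAux

variable {R : Type} [Ring R] {n : ℕ}

lemma q_sum_mem (q : TwoSidedIdeal R) {ι : Type} (s : Finset ι) (f : ι → R)
    (h : ∀ i ∈ s, f i ∈ q) : ∑ i ∈ s, f i ∈ q := by
  classical
  induction s using Finset.induction_on with
  | empty => simpa using q.zero_mem
  | @insert a s ha ih =>
    rw [Finset.sum_insert ha]
    exact q.add_mem (h a (Finset.mem_insert_self a s))
      (ih fun i hi => h i (Finset.mem_insert_of_mem hi))

lemma std_mulVec (i j : Fin n) (c : R) (v : Fin n → R) :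
    (Matrix.single i j c).mulVec v = Pi.single i (c * v j) := by
  funext k
  show ∑ l, (if i = k ∧ j = l then c else 0) * v l = _
  rw [Pi.single_apply]
  by_cases hik : k = i
  · subst hik
    rw [Finset.sum_eq_single j]
    · simp
    · intro l _ hl; simp [Ne.symm hl]
    · simp
  · rw [if_neg hik]
    apply Finset.sum_eq_zero
    intro l _
    rw [if_neg, zero_mul]
    rintro ⟨h1, h2⟩
    exact hik h1.symm

lemma sum_mulVec {ι : Type} (s : Finset ι) (A : ι → Matrix (Fin n) (Fin n) R) (v : Fin n → R) :
    (∑ p ∈ s, A p).mulVec v = ∑ p ∈ s, (A p).mulVec v := by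
  classical
  induction s using Finset.induction_on with
  | empty => funext k; simp [Matrix.mulVec, dotProduct]
  | @insert a s ha ih =>
    rw [Finset.sum_insert ha, Finset.sum_insert ha, Matrix.add_mulVec, ih]

lemma sum_std_sq (s : Finset (Fin n)) (I J : Fin n → Fin n) (c : Fin n → R)
    (hz : ∀ p ∈ s, ∀ p' ∈ s, J p ≠ I p') :
    (∑ p ∈ s, Matrix.single (I p) (J p) (c p)) * (∑ p ∈ s, Matrix.single (I p) (J p) (c p)) = 0 := by
  rw [Finset.sum_mul_sum]
  apply Finset.sum_eq_zero
  intro p hp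
  apply Finset.sum_eq_zero
  intro p' hp'
  exact Matrix.single_mul_single_of_ne _ _ _ _ (hz p hp p' hp') _

/-- unit `1 + N` when `N * N = 0`. -/
def sbUnit (N : Matrix (Fin n) (Fin n) R) (h : N * N = 0) : (Matrix (Fin n) (Fin n) R)ˣ where
  val := 1 + N
  inv := 1 - N
  val_inv := by
    have : (1 + N) * (1 - N) = 1 + (N * N * -1) := by noncomm_ring
    rw [this, h]; simp
  inv_val := by
    have : (1 - N) * (1 + N) = 1 + (N * N * -1) := by noncomm_ring
    rw [this, h]; simp

@[simp] lemma sbUnit_val (N : Matrix (Fin n) (Fin n) R) (h) : (sbUnit N h).val = 1 + N := rfl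
@[simp] lemma sbUnit_inv (N : Matrix (Fin n) (Fin n) R) (h) : ((sbUnit N h)⁻¹).val = 1 - N := rfl

lemma mem_CES_of_qElementary (q : TwoSidedIdeal R) (e : (Matrix (Fin n) (Fin n) R)ˣ)
    (he : IsQElementaryMatrix q e.val) : e ∈ CongruenceElementarySubgroup R n q := by
  apply Subgroup.subset_closure
  exact ⟨e, he, 1, Subgroup.one_mem _, by group⟩

lemma gen_mem (q : TwoSidedIdeal R) (I J : Fin n → Fin n) (c : Fin n → R)
    (s : Finset (Fin n)) (hne : ∀ p ∈ s, I p ≠ J p) (hz : ∀ p ∈ s, ∀ p' ∈ s, J p ≠ I p')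
    (u : (Matrix (Fin n) (Fin n) R)ˣ)
    (hu : u.val = 1 + ∑ p ∈ s, Matrix.single (I p) (J p) (c p)) :
    u ∈ ElementarySubgroup R n ∧
      ((∀ p ∈ s, c p ∈ q) → u ∈ CongruenceElementarySubgroup R n q) := by
  classical
  induction s using Finset.induction_on generalizing u with
  | empty =>
    have : u = 1 := Units.ext (by simpa using hu)
    subst this
    exact ⟨Subgroup.one_mem _, fun _ => Subgroup.one_mem _⟩
  | @insert a s ha ih =>
    have hza : Matrix.single (J a) (J a) (0:R) = 0 := by simp
    have hsq : Matrix.single (I a) (J a) (c a) * Matrix.single (I a) (J a) (c a) = 0 :=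
      Matrix.single_mul_single_of_ne _ _ _ _ (hz a (Finset.mem_insert_self a s) a (Finset.mem_insert_self a s)) _
    have hNsq : (∑ p ∈ s, Matrix.single (I p) (J p) (c p)) * (∑ p ∈ s, Matrix.single (I p) (J p) (c p)) = 0 :=
      sum_std_sq s I J c fun p hp p' hp' =>
        hz p (Finset.mem_insert_of_mem hp) p' (Finset.mem_insert_of_mem hp')
    set A := Matrix.single (I a) (J a) (c a) with hA
    set Ns := ∑ p ∈ s, Matrix.single (I p) (J p) (c p) with hNs
    have hAN : A * Ns = 0 := by
      rw [hNs, Finset.mul_sum]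
      apply Finset.sum_eq_zero
      intro p hp
      exact Matrix.single_mul_single_of_ne _ _ _ _
        (hz a (Finset.mem_insert_self a s) p (Finset.mem_insert_of_mem hp)) _
    have e : (Matrix (Fin n) (Fin n) R)ˣ := sbUnit A hsq
    have u' : (Matrix (Fin n) (Fin n) R)ˣ := sbUnit Ns hNsq
    have hprod : u = sbUnit A hsq * sbUnit Ns hNsq := by
      apply Units.ext
      show u.val = (1 + A) * (1 + Ns)
      rw [hu, Finset.sum_insert ha]
      have : (1 + A) * (1 + Ns) = 1 + (A + Ns) + A * Ns := by noncomm_ring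
      rw [this, hAN, add_zero]
    have heE : sbUnit A hsq ∈ ElementarySubgroup R n := by
      apply Subgroup.subset_closure
      exact ⟨I a, J a, hne a (Finset.mem_insert_self a s), c a, rfl⟩
    obtain ⟨ihE, ihQ⟩ := ih (fun p hp => hne p (Finset.mem_insert_of_mem hp))
      (fun p hp p' hp' => hz p (Finset.mem_insert_of_mem hp) p' (Finset.mem_insert_of_mem hp'))
      (sbUnit Ns hNsq) rfl
    constructor
    · rw [hprod]; exact Subgroup.mul_mem _ heE ihE
    · intro hcq
      rw [hprod]
      refine Subgroup.mul_mem _ ?_ (ihQ fun p hp => hcq p (Finset.mem_insert_of_mem hp))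
      exact mem_CES_of_qElementary q _
        ⟨I a, J a, hne a (Finset.mem_insert_self a s), c a, hcq a (Finset.mem_insert_self a s), rfl⟩

end BassAux

namespace BassAux

variable {R : Type} [Ring R] {n : ℕ}

lemma exists_colUnit (q : TwoSidedIdeal R) (j₀ : Fin n) (c : Fin n → R) :
    ∃ u : (Matrix (Fin n) (Fin n) R)ˣ,
      u ∈ ElementarySubgroup R n ∧
      ((∀ p, p ≠ j₀ → c p ∈ q) → u ∈ CongruenceElementarySubgroup R n q) ∧
      (∀ v k, u.val.mulVec v k = v k + if k = j₀ then 0 else c k * v j₀) := by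
  classical
  set s : Finset (Fin n) := Finset.univ.erase j₀ with hs
  have hmem : ∀ p, p ∈ s ↔ p ≠ j₀ := by
    intro p; simp [hs]
  have hz : ∀ p ∈ s, ∀ p' ∈ s, (j₀ : Fin n) ≠ p' := by
    intro p hp p' hp'
    exact fun h => ((hmem p').mp hp') h.symm
  have hNsq := sum_std_sq s (fun p => p) (fun _ => j₀) c hz
  refine ⟨sbUnit _ hNsq, ?_, ?_, ?_⟩
  · exact (gen_mem q _ _ c s (fun p hp => (hmem p).mp hp) hz _ rfl).1
  · intro hq
    exact (gen_mem q _ _ c s (fun p hp => (hmem p).mp hp) hz _ rfl).2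
      (fun p hp => hq p ((hmem p).mp hp))
  · intro v k
    rw [sbUnit_val, Matrix.add_mulVec, Matrix.one_mulVec, Pi.add_apply, sum_mulVec]
    congr 1
    rw [Finset.sum_apply]
    have : ∀ p ∈ s, (Matrix.single p j₀ (c p)).mulVec v k
        = if k = p then c p * v j₀ else 0 := by
      intro p _; rw [std_mulVec, Pi.single_apply]
    rw [Finset.sum_congr rfl this, Finset.sum_ite_eq s k (fun p => c p * v j₀)]
    by_cases hk : k = j₀
    · simp [hk, hmem]
    · simp [hmem, hk]

lemma exists_rowUnit (q : TwoSidedIdeal R) (i₀ : Fin n) (c : Fin n → R) :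
    ∃ u : (Matrix (Fin n) (Fin n) R)ˣ,
      u ∈ ElementarySubgroup R n ∧
      ((∀ p, p ≠ i₀ → c p ∈ q) → u ∈ CongruenceElementarySubgroup R n q) ∧
      (∀ v k, u.val.mulVec v k
        = if k = i₀ then v k + ∑ p ∈ Finset.univ.erase i₀, c p * v p else v k) ∧
      u.val = 1 + ∑ p ∈ Finset.univ.erase i₀, Matrix.single i₀ p (c p) := by
  classical
  set s : Finset (Fin n) := Finset.univ.erase i₀ with hs
  have hmem : ∀ p, p ∈ s ↔ p ≠ i₀ := by intro p; simp [hs]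
  have hne : ∀ p ∈ s, (i₀ : Fin n) ≠ p := fun p hp h => ((hmem p).mp hp) h.symm
  have hz : ∀ p ∈ s, ∀ p' ∈ s, p ≠ i₀ := fun p hp _ _ => (hmem p).mp hp
  have hNsq := sum_std_sq s (fun _ => i₀) (fun p => p) c hz
  refine ⟨sbUnit _ hNsq, ?_, ?_, ?_, rfl⟩
  · exact (gen_mem q _ _ c s hne hz _ rfl).1
  · intro hq
    exact (gen_mem q _ _ c s hne hz _ rfl).2 (fun p hp => hq p ((hmem p).mp hp))
  · intro v k
    rw [sbUnit_val, Matrix.add_mulVec, Matrix.one_mulVec, Pi.add_apply, sum_mulVec]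
    rw [Finset.sum_apply]
    have : ∀ p ∈ s, (Matrix.single i₀ p (c p)).mulVec v k
        = if k = i₀ then c p * v p else 0 := by
      intro p _; rw [std_mulVec, Pi.single_apply]
    rw [Finset.sum_congr rfl this]
    by_cases hk : k = i₀
    · simp [hk]
    · simp [hk]

/-- single transvection unit -/
lemma exists_tvUnit (q : TwoSidedIdeal R) (i j : Fin n) (hij : i ≠ j) (t : R) :
    ∃ u : (Matrix (Fin n) (Fin n) R)ˣ,
      u ∈ ElementarySubgroup R n ∧
      (t ∈ q → u ∈ CongruenceElementarySubgroup R n q) ∧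
      (∀ v k, u.val.mulVec v k = v k + if k = i then t * v j else 0) := by
  classical
  have hsq : Matrix.single i j t * Matrix.single i j t = 0 :=
    Matrix.single_mul_single_of_ne _ _ _ _ (Ne.symm hij) _
  refine ⟨sbUnit _ hsq, ?_, ?_, ?_⟩
  · exact Subgroup.subset_closure ⟨i, j, hij, t, rfl⟩
  · intro ht
    exact mem_CES_of_qElementary q _ ⟨i, j, hij, t, ht, rfl⟩
  · intro v k
    rw [sbUnit_val, Matrix.add_mulVec, Matrix.one_mulVec, Pi.add_apply, std_mulVec,
      Pi.single_apply]

lemma CES_conj (q : TwoSidedIdeal R) (h M : (Matrix (Fin n) (Fin n) R)ˣ)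
    (hh : h ∈ ElementarySubgroup R n) (hM : M ∈ CongruenceElementarySubgroup R n q) :
    h * M * h⁻¹ ∈ CongruenceElementarySubgroup R n q := by
  induction hM using Subgroup.closure_induction with
  | mem g hg =>
    obtain ⟨e, he, h₀, hh₀, rfl⟩ := hg
    apply Subgroup.subset_closure
    refine ⟨e, he, h * h₀, Subgroup.mul_mem _ hh hh₀, by group⟩
  | one => simpa using Subgroup.one_mem _
  | mul g₁ g₂ hg₁ hg₂ ih₁ ih₂ =>
    have : h * (g₁ * g₂) * h⁻¹ = (h * g₁ * h⁻¹) * (h * g₂ * h⁻¹) := by group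
    rw [this]; exact Subgroup.mul_mem _ ih₁ ih₂
  | inv g hg ih =>
    have : h * g⁻¹ * h⁻¹ = (h * g * h⁻¹)⁻¹ := by group
    rw [this]; exact Subgroup.inv_mem _ ih

lemma q_entries_mul_left (q : TwoSidedIdeal R) (A B : Matrix (Fin n) (Fin n) R)
    (hB : ∀ i j, B i j ∈ q) : ∀ i j, (A * B) i j ∈ q := by
  intro i j
  rw [Matrix.mul_apply]
  exact q_sum_mem q _ _ fun k _ => q.mul_mem_left _ _ (hB k j)

lemma q_entries_mul_right (q : TwoSidedIdeal R) (A B : Matrix (Fin n) (Fin n) R)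
    (hA : ∀ i j, A i j ∈ q) : ∀ i j, (A * B) i j ∈ q := by
  intro i j
  rw [Matrix.mul_apply]
  exact q_sum_mem q _ _ fun k _ => q.mul_mem_right _ _ (hA i k)

lemma CES_congruent (q : TwoSidedIdeal R) (M : (Matrix (Fin n) (Fin n) R)ˣ)
    (hM : M ∈ CongruenceElementarySubgroup R n q) :
    ∀ i j, (M.val - 1) i j ∈ q := by
  induction hM using Subgroup.closure_induction with
  | mem g hg =>
    obtain ⟨e, ⟨i₀, j₀, hij, t, ht, he⟩, h₀, _, rfl⟩ := hg
    intro i j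
    have h1 : (h₀ * e * h₀⁻¹).val = h₀.val * e.val * (h₀⁻¹).val := rfl
    have h2 : (h₀ * e * h₀⁻¹).val - 1
        = h₀.val * Matrix.single i₀ j₀ t * (h₀⁻¹).val := by
      rw [h1, he]
      have : h₀.val * (1 + Matrix.single i₀ j₀ t) * (h₀⁻¹).val
          = h₀.val * (h₀⁻¹).val + h₀.val * Matrix.single i₀ j₀ t * (h₀⁻¹).val := by
        noncomm_ring
      rw [this, Units.mul_inv]
      abel
    rw [h2]
    apply q_entries_mul_right
    apply q_entries_mul_left
    intro i j
    show (if i₀ = i ∧ j₀ = j then t else 0) ∈ q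
    split
    · exact ht
    · exact q.zero_mem
  | one => intro i j; simp [q.zero_mem]
  | mul g₁ g₂ hg₁ hg₂ ih₁ ih₂ =>
    intro i j
    have : (g₁ * g₂).val - 1 = (g₁.val - 1) * (g₂.val - 1) + (g₁.val - 1) + (g₂.val - 1) := by
      show g₁.val * g₂.val - 1 = _
      noncomm_ring
    rw [this]
    exact q.add_mem (q.add_mem (q_entries_mul_left q _ _ ih₂ i j) (ih₁ i j)) (ih₂ i j)
  | inv g hg ih =>
    intro i j
    have : (g⁻¹).val - 1 = (g⁻¹).val * (1 - g.val) := by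
      rw [Matrix.mul_sub, Matrix.mul_one, Units.inv_mul]
    rw [this]
    refine q_entries_mul_left q _ _ (fun i j => ?_) i j
    have : (1 : Matrix (Fin n) (Fin n) R) - g.val = -(g.val - 1) := by abel
    rw [this]
    exact q.neg_mem (ih i j)

end BassAux

namespace BassAux

variable {R : Type} [Ring R] {n : ℕ}

/-- connectivity by the congruence elementary subgroup -/
def Conn (q : TwoSidedIdeal R) (x y : Fin n → R) : Prop :=
  ∃ M ∈ CongruenceElementarySubgroup R n q, M.val.mulVec x = y

lemma conn_step (q : TwoSidedIdeal R) (u : (Matrix (Fin n) (Fin n) R)ˣ)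
    (hu : u ∈ CongruenceElementarySubgroup R n q) (x : Fin n → R) :
    Conn q x (u.val.mulVec x) := ⟨u, hu, rfl⟩

lemma conn_trans (q : TwoSidedIdeal R) {x y z : Fin n → R}
    (h₁ : Conn q x y) (h₂ : Conn q y z) : Conn q x z := by
  obtain ⟨M, hM, rfl⟩ := h₁
  obtain ⟨N, hN, rfl⟩ := h₂
  exact ⟨N * M, Subgroup.mul_mem _ hN hM, by rw [Units.val_mul, ← Matrix.mulVec_mulVec]⟩

lemma inv_mulVec_cancel (F : (Matrix (Fin n) (Fin n) R)ˣ) (v : Fin n → R) :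
    (F⁻¹).val.mulVec (F.val.mulVec v) = v := by
  rw [Matrix.mulVec_mulVec]
  norm_cast
  rw [inv_mul_cancel]
  exact Matrix.one_mulVec v

lemma conn_symm (q : TwoSidedIdeal R) {x y : Fin n → R} (h : Conn q x y) : Conn q y x := by
  obtain ⟨M, hM, rfl⟩ := h
  exact ⟨M⁻¹, Subgroup.inv_mem _ hM, inv_mulVec_cancel M x⟩

lemma conn_conj_fix (q : TwoSidedIdeal R) (F : (Matrix (Fin n) (Fin n) R)ˣ)
    (hF : F ∈ ElementarySubgroup R n) {v t : Fin n → R} (hFt : F.val.mulVec t = t)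
    (h : Conn q (F.val.mulVec v) t) : Conn q v t := by
  obtain ⟨M, hM, hMv⟩ := h
  refine ⟨F⁻¹ * M * F, ?_, ?_⟩
  · have := CES_conj q F⁻¹ M (Subgroup.inv_mem _ hF) hM
    rwa [inv_inv] at this
  · have hval : (F⁻¹ * M * F).val = (F⁻¹).val * M.val * F.val := rfl
    rw [hval, ← Matrix.mulVec_mulVec, ← Matrix.mulVec_mulVec, hMv]
    conv_lhs => rw [← hFt]
    rw [inv_mulVec_cancel]

lemma sum_erase_last {m : ℕ} (f : Fin (m + 1) → R) :
    ∑ p ∈ Finset.univ.erase (Fin.last m), f p = ∑ i : Fin m, f i.castSucc := by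
  have h1 := Finset.sum_erase_add Finset.univ f (Finset.mem_univ (Fin.last m))
  rw [Fin.sum_univ_castSucc] at h1
  exact add_right_cancel h1

lemma exists_elem_to_single (R : Type) [Ring R] (r m : ℕ) (q : TwoSidedIdeal R)
    (hSR : SatisfiesSR R r) (hm : r ≤ m + 1) (hm1 : 1 ≤ m)
    (x : Fin (m + 1) → R) (hx : IsUnimodular R x) :
    ∃ F ∈ ElementarySubgroup R (m + 1), F.val.mulVec x = Pi.single 0 1 := by
  classical
  obtain ⟨b, hb⟩ := hSR m hm x hx
  set L : Fin (m + 1) := Fin.last m with hL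
  have h0L : (0 : Fin (m + 1)) ≠ L := by
    rw [hL, Fin.ne_iff_vne]
    simp only [Fin.val_last, Fin.val_zero]
    omega
  -- step 1: make first m coordinates unimodular
  set c₁ : Fin (m + 1) → R := fun p => if h : p = L then 0 else b (p.castPred h) with hc₁
  obtain ⟨u₁, hu₁E, _, hu₁v⟩ := exists_colUnit q L c₁
  set x₁ := u₁.val.mulVec x with hx₁
  have hcs : ∀ i : Fin m, i.castSucc ≠ L := fun i => (Fin.castSucc_lt_last i).ne
  have hx₁c : ∀ i : Fin m, x₁ i.castSucc = x i.castSucc + b i * x L := by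
    intro i
    rw [hx₁, hu₁v, if_neg (hcs i)]
    simp only [hc₁]
    rw [dif_neg (hcs i), Fin.castPred_castSucc]
  have hx₁L : x₁ L = x L := by rw [hx₁, hu₁v]; simp
  have hb' : IsUnimodular R (fun i : Fin m => x₁ i.castSucc) := by
    have heq : (fun i : Fin m => x₁ i.castSucc) = fun i => x i.castSucc + b i * x L := by
      funext i; exact hx₁c i
    rw [heq]; exact hb
  obtain ⟨a, ha⟩ := (unimodular_iff _).mp hb'
  -- step 2: make last coordinate 1
  set c₂ : Fin (m + 1) → R :=
    fun p => if h : p = L then 0 else (1 - x₁ L) * a (p.castPred h) with hc₂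
  obtain ⟨u₂, hu₂E, _, hu₂v, _⟩ := exists_rowUnit q L c₂
  set x₂ := u₂.val.mulVec x₁ with hx₂
  have hx₂k : ∀ k, k ≠ L → x₂ k = x₁ k := by
    intro k hk; rw [hx₂, hu₂v, if_neg hk]
  have hx₂L : x₂ L = 1 := by
    rw [hx₂, hu₂v, if_pos rfl, sum_erase_last (fun p => c₂ p * x₁ p)]
    have heq : ∀ i ∈ Finset.univ, c₂ (Fin.castSucc i) * x₁ (Fin.castSucc i)
        = (1 - x₁ L) * (a i * x₁ i.castSucc) := by
      intro i _
      simp only [hc₂]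
      rw [dif_neg (hcs i), Fin.castPred_castSucc, mul_assoc]
    rw [Finset.sum_congr rfl heq, ← Finset.mul_sum, ha, mul_one]
    abel
  -- step 3: clear the first m coordinates
  set c₃ : Fin (m + 1) → R := fun p => -(x₂ p) with hc₃
  obtain ⟨u₃, hu₃E, _, hu₃v⟩ := exists_colUnit q L c₃
  set x₃ := u₃.val.mulVec x₂ with hx₃
  have hx₃e : ∀ k, x₃ k = if k = L then 1 else 0 := by
    intro k
    rw [hx₃, hu₃v]
    by_cases hk : k = L
    · rw [if_pos hk, if_pos hk, hk, hx₂L, add_zero]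
    · rw [if_neg hk, if_neg hk]
      simp only [hc₃]
      rw [hx₂L, mul_one]
      abel
  -- step 4: e_L → e_L + e_0
  obtain ⟨t₁, ht₁E, _, ht₁v⟩ := exists_tvUnit q 0 L h0L 1
  set x₄ := t₁.val.mulVec x₃ with hx₄
  have hx₄e : ∀ k, x₄ k = (if k = L then 1 else 0) + (if k = 0 then 1 else 0) := by
    intro k
    rw [hx₄, ht₁v, hx₃e, hx₃e, if_pos rfl, one_mul]
  -- step 5: e_L + e_0 → e_0
  obtain ⟨t₂, ht₂E, _, ht₂v⟩ := exists_tvUnit q L 0 (Ne.symm h0L) (-1)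
  set x₅ := t₂.val.mulVec x₄ with hx₅
  have hx₄0 : x₄ 0 = 1 := by
    rw [hx₄e, if_neg h0L, if_pos rfl, zero_add]
  have hx₅e : x₅ = Pi.single 0 1 := by
    funext k
    rw [hx₅, ht₂v, Pi.single_apply, hx₄e]
    by_cases hk : k = L
    · have hk0 : k ≠ 0 := by rw [hk]; exact Ne.symm h0L
      rw [if_pos hk, if_pos hk, if_neg hk0, hx₄0]
      norm_num
    · rw [if_neg hk, if_neg hk, add_zero, zero_add]
  refine ⟨t₂ * t₁ * u₃ * u₂ * u₁, ?_, ?_⟩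
  · exact Subgroup.mul_mem _ (Subgroup.mul_mem _ (Subgroup.mul_mem _
      (Subgroup.mul_mem _ ht₂E ht₁E) hu₃E) hu₂E) hu₁E
  · show ((t₂ * t₁ * u₃ * u₂ * u₁).val).mulVec x = _
    rw [Units.val_mul, Units.val_mul, Units.val_mul, Units.val_mul]
    rw [← Matrix.mulVec_mulVec, ← Matrix.mulVec_mulVec, ← Matrix.mulVec_mulVec,
      ← Matrix.mulVec_mulVec]
    rw [← hx₁, ← hx₂, ← hx₃, ← hx₄, ← hx₅, hx₅e]

end BassAux

namespace BassAux

variable {R : Type} [Ring R] {n : ℕ}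

lemma conn_equivar (q : TwoSidedIdeal R) (F : (Matrix (Fin n) (Fin n) R)ˣ)
    (hF : F ∈ ElementarySubgroup R n) {v w : Fin n → R}
    (h : Conn q (F.val.mulVec v) (F.val.mulVec w)) : Conn q v w := by
  obtain ⟨M, hM, hMv⟩ := h
  refine ⟨F⁻¹ * M * F, ?_, ?_⟩
  · have := CES_conj q F⁻¹ M (Subgroup.inv_mem _ hF) hM
    rwa [inv_inv] at this
  · have hval : (F⁻¹ * M * F).val = (F⁻¹).val * M.val * F.val := rfl
    rw [hval, ← Matrix.mulVec_mulVec, ← Matrix.mulVec_mulVec, hMv, inv_mulVec_cancel]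

lemma unimod_unit (u : (Matrix (Fin n) (Fin n) R)ˣ) (v : Fin n → R)
    (hv : IsUnimodular R v) : IsUnimodular R (u.val.mulVec v) := by
  rw [unimodular_iff] at hv ⊢
  obtain ⟨a, ha⟩ := hv
  refine ⟨Matrix.vecMul a (u⁻¹).val, ?_⟩
  show dotProduct (Matrix.vecMul a (u⁻¹).val) (u.val.mulVec v) = 1
  rw [dotProduct_mulVec, Matrix.vecMul_vecMul]
  norm_cast
  rw [inv_mul_cancel]
  show dotProduct (Matrix.vecMul a 1) v = 1
  rw [Matrix.vecMul_one]
  exact ha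

lemma conn_to_single (R : Type) [Ring R] (r m : ℕ) (q : TwoSidedIdeal R)
    (hSR : SatisfiesSR R r) (hm : r ≤ m + 1) (hm1 : 1 ≤ m)
    (y : Fin (m + 1) → R) (hy : IsUnimodular R y)
    (hyq : ∀ p, y p - (Pi.single 0 1 : Fin (m + 1) → R) p ∈ q) :
    Conn q y (Pi.single 0 1) := by
  classical
  set L : Fin (m + 1) := Fin.last m with hL
  have h0L : (0 : Fin (m + 1)) ≠ L := by
    rw [hL, Fin.ne_iff_vne]
    simp only [Fin.val_last, Fin.val_zero]
    omega
  have hsingle : ∀ p : Fin (m + 1), p ≠ 0 → (Pi.single 0 1 : Fin (m + 1) → R) p = 0 := by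
    intro p hp; rw [Pi.single_apply, if_neg hp]
  have hyqp : ∀ p, p ≠ 0 → y p ∈ q := by
    intro p hp
    have := hyq p
    rwa [hsingle p hp, sub_zero] at this
  have hyq0 : y 0 - 1 ∈ q := by
    have := hyq 0
    rwa [Pi.single_apply, if_pos rfl] at this
  -- step 1
  obtain ⟨b, hb⟩ := hSR m hm y hy
  set c₁ : Fin (m + 1) → R := fun p => if h : p = L then 0 else b (p.castPred h) with hc₁
  obtain ⟨u₁, hu₁E, _, hu₁v⟩ := exists_colUnit q L c₁
  set y₁ := u₁.val.mulVec y with hy₁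
  have hcs : ∀ i : Fin m, i.castSucc ≠ L := fun i => (Fin.castSucc_lt_last i).ne
  have hy₁c : ∀ k, k ≠ L → y₁ k = y k + c₁ k * y L := by
    intro k hk; rw [hy₁, hu₁v, if_neg hk]
  have hy₁L : y₁ L = y L := by rw [hy₁, hu₁v]; simp
  have hb' : IsUnimodular R (fun i : Fin m => y₁ i.castSucc) := by
    have heq : (fun i : Fin m => y₁ i.castSucc) = fun i => y i.castSucc + b i * y L := by
      funext i
      rw [hy₁c i.castSucc (hcs i)]
      congr 1
      simp only [hc₁]
      rw [dif_neg (hcs i), Fin.castPred_castSucc]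
    rw [heq]; exact hb
  obtain ⟨a, ha⟩ := (unimodular_iff _).mp hb'
  have hLne0 : L ≠ 0 := Ne.symm h0L
  have hy₁p : ∀ p, p ≠ 0 → p ≠ L → y₁ p ∈ q := by
    intro p hp hpL
    rw [hy₁c p hpL]
    exact q.add_mem (hyqp p hp) (q.mul_mem_left _ _ (hyqp L hLne0))
  have hy₁Lq : y₁ L ∈ q := by rw [hy₁L]; exact hyqp L hLne0
  have hy₁0 : y₁ 0 - 1 ∈ q := by
    rw [hy₁c 0 h0L]
    have : y 0 + c₁ 0 * y L - 1 = (y 0 - 1) + c₁ 0 * y L := by abel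
    rw [this]
    exact q.add_mem hyq0 (q.mul_mem_left _ _ (hyqp L hLne0))
  have hzq : 1 - y₁ 0 - y₁ L ∈ q := by
    have h1 : 1 - y₁ 0 ∈ q := by
      have := q.neg_mem hy₁0
      rwa [neg_sub] at this
    exact q.sub_mem h1 hy₁Lq
  -- step 2 : set last coordinate to 1 - y₁ 0
  set c₂ : Fin (m + 1) → R :=
    fun p => if h : p = L then 0 else (1 - y₁ 0 - y₁ L) * a (p.castPred h) with hc₂
  obtain ⟨u₂, hu₂E, hu₂Q, hu₂v, _⟩ := exists_rowUnit q L c₂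
  have hu₂CES : u₂ ∈ CongruenceElementarySubgroup R (m + 1) q := by
    apply hu₂Q
    intro p hp
    simp only [hc₂]
    rw [dif_neg hp]
    exact q.mul_mem_right _ _ hzq
  set y₂ := u₂.val.mulVec y₁ with hy₂
  have hy₂k : ∀ k, k ≠ L → y₂ k = y₁ k := by
    intro k hk; rw [hy₂, hu₂v, if_neg hk]
  have hy₂L : y₂ L = 1 - y₁ 0 := by
    rw [hy₂, hu₂v, if_pos rfl, sum_erase_last (fun p => c₂ p * y₁ p)]
    have heq : ∀ i ∈ Finset.univ, c₂ (Fin.castSucc i) * y₁ (Fin.castSucc i)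
        = (1 - y₁ 0 - y₁ L) * (a i * y₁ i.castSucc) := by
      intro i _
      simp only [hc₂]
      rw [dif_neg (hcs i), Fin.castPred_castSucc, mul_assoc]
    rw [Finset.sum_congr rfl heq, ← Finset.mul_sum, ha, mul_one]
    abel
  -- step 3 : conjugating transvection adds coordinate L to coordinate 0
  obtain ⟨t₁, ht₁E, _, ht₁v⟩ := exists_tvUnit q 0 L h0L 1
  set y₃ := t₁.val.mulVec y₂ with hy₃
  have hy₃0 : y₃ 0 = 1 := by
    rw [hy₃, ht₁v, if_pos rfl, one_mul, hy₂L, hy₂k 0 h0L]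
    abel
  have hy₃k : ∀ k, k ≠ 0 → y₃ k = y₂ k := by
    intro k hk; rw [hy₃, ht₁v, if_neg hk, add_zero]
  -- step 4 : clear all other coordinates
  set c₅ : Fin (m + 1) → R := fun p => -(y₃ p) with hc₅
  obtain ⟨u₅, hu₅E, hu₅Q, hu₅v⟩ := exists_colUnit q 0 c₅
  have hu₅CES : u₅ ∈ CongruenceElementarySubgroup R (m + 1) q := by
    apply hu₅Q
    intro p hp
    simp only [hc₅]
    apply q.neg_mem
    by_cases hpL : p = L
    · rw [hpL, hy₃k L hLne0, hy₂L]
      have := q.neg_mem hy₁0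
      rwa [neg_sub] at this
    · rw [hy₃k p hp, hy₂k p hpL]
      exact hy₁p p hp hpL
  have hy₄ : u₅.val.mulVec y₃ = Pi.single 0 1 := by
    funext k
    rw [hu₅v, Pi.single_apply]
    by_cases hk : k = 0
    · rw [if_pos hk, if_pos hk, hk, add_zero, hy₃0]
    · rw [if_neg hk, if_neg hk]
      simp only [hc₅]
      rw [hy₃0, mul_one]
      abel
  -- assemble
  have conn3 : Conn q y₃ (Pi.single 0 1) := ⟨u₅, hu₅CES, hy₄⟩
  have ht₁fix : t₁.val.mulVec (Pi.single 0 1) = Pi.single 0 1 := by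
    funext k
    rw [ht₁v]
    have : (Pi.single 0 1 : Fin (m + 1) → R) L = 0 := hsingle L hLne0
    rw [this, mul_zero]
    by_cases hk : k = 0
    · rw [if_pos hk, add_zero]
    · rw [if_neg hk, add_zero]
  have conn2 : Conn q y₂ (Pi.single 0 1) := conn_conj_fix q t₁ ht₁E ht₁fix (by rw [← hy₃]; exact conn3)
  have conn1 : Conn q y₁ (Pi.single 0 1) :=
    conn_trans q (conn_step q u₂ hu₂CES y₁) (by rw [← hy₂]; exact conn2)
  have hu₁fix : u₁.val.mulVec (Pi.single 0 1) = Pi.single 0 1 := by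
    funext k
    rw [hu₁v]
    have : (Pi.single 0 1 : Fin (m + 1) → R) L = 0 := hsingle L hLne0
    rw [this, mul_zero]
    by_cases hk : k = L
    · rw [if_pos hk, add_zero]
    · rw [if_neg hk, add_zero]
  exact conn_conj_fix q u₁ hu₁E hu₁fix (by rw [← hy₁]; exact conn1)

lemma conn_of_congruent (R : Type) [Ring R] (r m : ℕ) (q : TwoSidedIdeal R)
    (hSR : SatisfiesSR R r) (hm : r ≤ m + 1) (hm1 : 1 ≤ m)
    (x y : Fin (m + 1) → R) (hx : IsUnimodular R x) (hy : IsUnimodular R y)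
    (hq : ∀ p, x p - y p ∈ q) :
    ∃ M ∈ CongruenceElementarySubgroup R (m + 1) q, M.val.mulVec x = y := by
  obtain ⟨F, hFE, hFx⟩ := exists_elem_to_single R r m q hSR hm hm1 x hx
  have hFy : IsUnimodular R (F.val.mulVec y) := unimod_unit F y hy
  have hdiff : ∀ p, (F.val.mulVec y) p - (F.val.mulVec x) p ∈ q := by
    intro p
    have : (F.val.mulVec y) p - (F.val.mulVec x) p = ∑ j, F.val p j * (y j - x j) := by
      show (∑ j, F.val p j * y j) - (∑ j, F.val p j * x j) = _
      rw [← Finset.sum_sub_distrib]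
      refine Finset.sum_congr rfl fun j _ => ?_
      rw [mul_sub]
    rw [this]
    exact q_sum_mem q _ _ fun j _ => q.mul_mem_left _ _ (by
      have := q.neg_mem (hq j); rwa [neg_sub] at this)
  have hFyq : ∀ p, (F.val.mulVec y) p - (Pi.single 0 1 : Fin (m + 1) → R) p ∈ q := by
    intro p
    have := hdiff p
    rwa [hFx] at this
  have conn : Conn q (F.val.mulVec y) (Pi.single 0 1) :=
    conn_to_single R r m q hSR hm hm1 _ hFy hFyq
  rw [← hFx] at conn
  have : Conn q y x := conn_equivar q F hFE conn
  exact conn_symm q this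

end BassAux

namespace BassAux

variable {R : Type} [Ring R] {n : ℕ}

/-- `mulVec` as an `Rᵐᵒᵖ`-linear map. -/
def mvLinear (A : Matrix (Fin n) (Fin n) R) : (Fin n → R) →ₗ[Rᵐᵒᵖ] (Fin n → R) where
  toFun := A.mulVec
  map_add' := Matrix.mulVec_add A
  map_smul' := by
    intro c v
    funext i
    show (A.mulVec fun j => v j * c.unop) i = A.mulVec v i * c.unop
    show ∑ j, A i j * (v j * c.unop) = (∑ j, A i j * v j) * c.unop
    rw [Finset.sum_mul]
    exact Finset.sum_congr rfl fun j _ => (mul_assoc _ _ _).symm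

@[simp] lemma mvLinear_apply (A : Matrix (Fin n) (Fin n) R) (v : Fin n → R) :
    mvLinear A v = A.mulVec v := rfl

/-- `mulVec` by a unit as an `Rᵐᵒᵖ`-linear equivalence. -/
def mvEquiv (u : (Matrix (Fin n) (Fin n) R)ˣ) : (Fin n → R) ≃ₗ[Rᵐᵒᵖ] (Fin n → R) :=
  LinearEquiv.ofLinear (mvLinear u.val) (mvLinear (u⁻¹).val)
    (LinearMap.ext fun v => by
      show u.val.mulVec ((u⁻¹).val.mulVec v) = v
      have := inv_mulVec_cancel u⁻¹ v
      rwa [inv_inv] at this)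
    (LinearMap.ext fun v => inv_mulVec_cancel u v)

@[simp] lemma mvEquiv_apply (u : (Matrix (Fin n) (Fin n) R)ˣ) (v : Fin n → R) :
    mvEquiv u v = u.val.mulVec v := rfl

lemma compl_functional (W : Submodule Rᵐᵒᵖ (Fin n → R)) (y : Fin n → R)
    (hW : IsCompl W (Submodule.span Rᵐᵒᵖ {y})) (φ : (Fin n → R) →ₗ[Rᵐᵒᵖ] R) (hφ : φ y = 1) :
    ∃ δ : (Fin n → R) →ₗ[Rᵐᵒᵖ] R, δ y = 1 ∧ (∀ w ∈ W, δ w = 0) ∧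
      (∀ v, v - MulOpposite.op (δ v) • y ∈ W) ∧ (∀ v, δ v = 0 → v ∈ W) := by
  set S := Submodule.span Rᵐᵒᵖ {y} with hS
  set P := S.linearProjOfIsCompl W hW.symm with hP
  have key : ∀ v, v - MulOpposite.op (φ ((P v : (Fin n → R)))) • y ∈ W := by
    intro v
    have hv : v ∈ W ⊔ S := by rw [hW.sup_eq_top]; trivial
    obtain ⟨w, hw, z, hz, hwz⟩ := Submodule.mem_sup.mp hv
    have hPw : P w = 0 := Submodule.linearProjOfIsCompl_apply_right hW.symm ⟨w, hw⟩
    have hPz : P z = ⟨z, hz⟩ := Submodule.linearProjOfIsCompl_apply_left hW.symm ⟨z, hz⟩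
    have hPv : ((P v : (Fin n → R))) = z := by
      rw [← hwz, map_add, hPw, hPz, zero_add]
    obtain ⟨aop, haop⟩ := Submodule.mem_span_singleton.mp hz
    have hδ : φ ((P v : (Fin n → R))) = aop.unop := by
      rw [hPv, ← haop, LinearMap.map_smul, hφ, op_smul_eq, one_mul]
    rw [hδ, MulOpposite.op_unop, haop, ← hwz, add_sub_cancel_right]
    exact hw
  refine ⟨φ.comp (S.subtype.comp P), ?_, ?_, key, ?_⟩
  · show φ ((P y : (Fin n → R))) = 1
    have hPy : P y = ⟨y, Submodule.mem_span_singleton_self y⟩ :=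
      Submodule.linearProjOfIsCompl_apply_left hW.symm ⟨y, Submodule.mem_span_singleton_self y⟩
    rw [hPy]
    exact hφ
  · intro w hw
    show φ ((P w : (Fin n → R))) = 0
    have hPw : P w = 0 := Submodule.linearProjOfIsCompl_apply_right hW.symm ⟨w, hw⟩
    rw [hPw]
    simp
  · intro v h0
    have := key v
    rw [show φ ((P v : (Fin n → R))) = 0 from h0] at this
    simpa using this

lemma CES_mulVec_congruent (q : TwoSidedIdeal R) (M : (Matrix (Fin n) (Fin n) R)ˣ)
    (hM : M ∈ CongruenceElementarySubgroup R n q) (u : Fin n → R) (i : Fin n) :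
    M.val.mulVec u i - u i ∈ q := by
  have h1 : M.val.mulVec u i - u i = (M.val - 1).mulVec u i := by
    rw [Matrix.sub_mulVec, Matrix.one_mulVec]
    rfl
  rw [h1]
  show ∑ j, (M.val - 1) i j * u j ∈ q
  exact q_sum_mem q _ _ fun j _ => q.mul_mem_right _ _ (CES_congruent q M hM i j)

lemma mulVec_single_one (A : Matrix (Fin n) (Fin n) R) (j₀ : Fin n) (k : Fin n) :
    A.mulVec (Pi.single j₀ 1) k = A k j₀ := by
  simp [Matrix.mulVec, dotProduct, Pi.single_apply, mul_ite]

end BassAux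

namespace BassAux

lemma transvection_CES (R : Type) [Ring R] (r m : ℕ) (q : TwoSidedIdeal R)
    (hSR : SatisfiesSR R r) (hm : r ≤ m + 1) (hm1 : 1 ≤ m)
    (y : Fin (m + 1) → R) (hy : IsUnimodular R y) (g : Fin (m + 1) → R)
    (hg : ∀ j, g j ∈ q) (hgy : ∑ j, g j * y j = 0) :
    ∃ T : (Matrix (Fin (m + 1)) (Fin (m + 1)) R)ˣ,
      T ∈ CongruenceElementarySubgroup R (m + 1) q ∧
      (∀ v k, T.val.mulVec v k = v k + y k * ∑ j, g j * v j) ∧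
      (∀ v k, (T⁻¹).val.mulVec v k = v k - y k * ∑ j, g j * v j) := by
  classical
  set N : Matrix (Fin (m + 1)) (Fin (m + 1)) R := Matrix.of (fun i j => y i * g j) with hN
  have hNsq : N * N = 0 := by
    ext i j
    rw [Matrix.mul_apply, Matrix.zero_apply]
    show ∑ k, (y i * g k) * (y k * g j) = 0
    have h1 : ∀ k ∈ Finset.univ, (y i * g k) * (y k * g j) = y i * ((g k * y k) * g j) := by
      intro k _
      rw [mul_assoc, ← mul_assoc (g k)]
    rw [Finset.sum_congr rfl h1, ← Finset.mul_sum, ← Finset.sum_mul, hgy, zero_mul, mul_zero]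
  have hmv : ∀ (v : Fin (m + 1) → R) k, N.mulVec v k = y k * ∑ j, g j * v j := by
    intro v k
    show ∑ j, (y k * g j) * v j = _
    rw [Finset.mul_sum]
    exact Finset.sum_congr rfl fun j _ => mul_assoc _ _ _
  refine ⟨sbUnit N hNsq, ?_, ?_, ?_⟩
  · -- membership in the congruence elementary subgroup
    obtain ⟨F, hFE, hFy⟩ := exists_elem_to_single R r m q hSR hm hm1 y hy
    set w : Fin (m + 1) → R := fun p => ∑ k, g k * (F⁻¹).val k p with hw
    have hcol : ∀ k, (F⁻¹).val k 0 = y k := by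
      intro k
      have h1 : (F⁻¹).val.mulVec (Pi.single 0 1) = y := by rw [← hFy, inv_mulVec_cancel]
      rw [← h1, mulVec_single_one]
    have hw0 : w 0 = 0 := by
      have h2 : ∀ k ∈ Finset.univ, g k * (F⁻¹).val k 0 = g k * y k := by
        intro k _; rw [hcol]
      show ∑ k, g k * (F⁻¹).val k 0 = 0
      rw [Finset.sum_congr rfl h2, hgy]
    have hwq : ∀ p, w p ∈ q := fun p => q_sum_mem q _ _ fun k _ => q.mul_mem_right _ _ (hg k)
    obtain ⟨u, huE, huQ, _, huval⟩ := exists_rowUnit q 0 w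
    have huCES := huQ fun p _ => hwq p
    have hFN : F.val * N
        = Matrix.of (fun i l => (Pi.single 0 1 : Fin (m + 1) → R) i * g l) := by
      ext i l
      rw [Matrix.mul_apply, Matrix.of_apply]
      show ∑ k, F.val i k * (y k * g l) = (Pi.single 0 1 : Fin (m + 1) → R) i * g l
      have h3 : ∀ k ∈ Finset.univ, F.val i k * (y k * g l) = (F.val i k * y k) * g l :=
        fun k _ => (mul_assoc _ _ _).symm
      rw [Finset.sum_congr rfl h3, ← Finset.sum_mul, ← hFy]
      rfl
    have hconj : (F * sbUnit N hNsq * F⁻¹) = u := by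
      apply Units.ext
      show F.val * (1 + N) * (F⁻¹).val = u.val
      rw [huval]
      have h2 : F.val * (1 + N) * (F⁻¹).val
          = F.val * (F⁻¹).val + F.val * N * (F⁻¹).val := by noncomm_ring
      rw [h2, Units.mul_inv]
      congr 1
      rw [hFN]
      ext i j
      rw [Matrix.mul_apply, Matrix.sum_apply]
      have hl : ∀ l ∈ Finset.univ,
          (Matrix.of (fun i l => (Pi.single 0 1 : Fin (m + 1) → R) i * g l)) i l
            * (F⁻¹).val l j
          = (Pi.single 0 1 : Fin (m + 1) → R) i * (g l * (F⁻¹).val l j) := by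
        intro l _
        rw [Matrix.of_apply, mul_assoc]
      rw [Finset.sum_congr rfl hl, ← Finset.mul_sum]
      have hr : ∀ p ∈ Finset.univ.erase 0, Matrix.single (0 : Fin (m + 1)) p (w p) i j
          = if p = j then (if (0 : Fin (m + 1)) = i then w p else 0) else 0 := by
        intro p _
        show (if (0 : Fin (m + 1)) = i ∧ p = j then w p else 0) = _
        by_cases h1 : p = j <;> by_cases h2 : (0 : Fin (m + 1)) = i <;> simp [h1, h2]
      rw [Finset.sum_congr rfl hr,
        Finset.sum_ite_eq' (Finset.univ.erase 0) j (fun p => if (0 : Fin (m + 1)) = i then w p else 0)]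
      rw [Pi.single_apply]
      by_cases hi : i = 0
      · by_cases hj : j = (0 : Fin (m + 1))
        · rw [if_pos hi, one_mul, if_neg (by simp [hj]), hj]
          exact hw0
        · rw [if_pos hi, one_mul, if_pos (by simp [hj]), if_pos hi.symm]
      · rw [if_neg hi, zero_mul]
        by_cases hj : j ∈ Finset.univ.erase (0 : Fin (m + 1))
        · rw [if_pos hj, if_neg (fun h => hi h.symm)]
        · rw [if_neg hj]
    have heq : sbUnit N hNsq = F⁻¹ * u * F := by
      rw [← hconj]; group
    rw [heq]
    have hfin := CES_conj q F⁻¹ u (Subgroup.inv_mem _ hFE) huCES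
    rwa [inv_inv] at hfin
  · intro v k
    rw [sbUnit_val, Matrix.add_mulVec, Matrix.one_mulVec, Pi.add_apply, hmv]
  · intro v k
    rw [sbUnit_inv, Matrix.sub_mulVec, Matrix.one_mulVec, Pi.sub_apply, hmv]

end BassAux

open BassAux

/-- If `R` satisfies `(SR_r)`, `n ≥ r`, `x, y ∈ Rⁿ` are unimodular with complements
`C, D`, and `x, y` (resp. `C, D`) have the same image in `(R/q)ⁿ`, then some
`M ∈ EL_n(R, q)` satisfies `M·x = y` and `M·C = D`. -/
theorem congruenceElementary_transitive_on_split_unimodular (R : Type) [Ring R] (r n : ℕ)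
    (hSR : SatisfiesSR R r) (q : TwoSidedIdeal R) (hn : r ≤ n)
    (x y : Fin n → R) (hx : IsUnimodular R x) (hy : IsUnimodular R y)
    (C D : Submodule Rᵐᵒᵖ (Fin n → R))
    (hC : IsCompl C (Submodule.span Rᵐᵒᵖ {x}))
    (hD : IsCompl D (Submodule.span Rᵐᵒᵖ {y}))
    (hxy : (fun i => (x i : q.ringCon.Quotient)) = fun i => (y i : q.ringCon.Quotient))
    (hCD : (fun (u : Fin n → R) (i : Fin n) => (u i : q.ringCon.Quotient)) ''
             (C : Set (Fin n → R)) =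
           (fun (u : Fin n → R) (i : Fin n) => (u i : q.ringCon.Quotient)) ''
             (D : Set (Fin n → R))) :
    ∃ M ∈ CongruenceElementarySubgroup R n q, M.val.mulVec x = y ∧
      (fun u : Fin n → R => M.val.mulVec u) '' (C : Set (Fin n → R)) =
        (D : Set (Fin n → R)) := by
  classical
  rcases subsingleton_or_nontrivial R with hss | hnt
  · refine ⟨1, Subgroup.one_mem _, funext fun i => Subsingleton.elim _ _, ?_⟩
    have hfun : (fun u : Fin n → R => ((1 : (Matrix (Fin n) (Fin n) R)ˣ)).val.mulVec u)
        = fun u => u := by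
      funext u
      show (1 : Matrix (Fin n) (Fin n) R).mulVec u = u
      exact Matrix.one_mulVec u
    rw [hfun, Set.image_id']
    ext v
    constructor
    · intro _
      have hv : v = 0 := Subsingleton.elim _ _
      rw [hv]; exact D.zero_mem
    · intro _
      have hv : v = 0 := Subsingleton.elim _ _
      rw [hv]; exact C.zero_mem
  · have hr2 : 2 ≤ r := by
      by_contra hcon
      push_neg at hcon
      have h01 : r ≤ 0 + 1 := by omega
      have huni : IsUnimodular R (fun _ : Fin 1 => (1 : R)) := by
        rw [unimodular_iff]
        exact ⟨fun _ => 1, by simp⟩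
      obtain ⟨b, φ, hφ⟩ := hSR 0 h01 _ huni
      have hz : (fun i : Fin 0 => (fun _ : Fin 1 => (1 : R)) i.castSucc
          + b i * (fun _ : Fin 1 => (1 : R)) (Fin.last 0)) = (0 : Fin 0 → R) :=
        funext fun i => i.elim0
      rw [hz, map_zero] at hφ
      exact zero_ne_one hφ
    obtain ⟨m, rfl⟩ : ∃ m, n = m + 1 := ⟨n - 1, by omega⟩
    have hm : r ≤ m + 1 := hn
    have hm1 : 1 ≤ m := by omega
    have hxyq : ∀ p, x p - y p ∈ q := fun p => (quot_eq_iff q _ _).mp (congrFun hxy p)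
    obtain ⟨M₁, hM₁CES, hM₁x⟩ := conn_of_congruent R r m q hSR hm hm1 x y hx hy hxyq
    set e₁ := mvEquiv M₁ with he₁
    set C' : Submodule Rᵐᵒᵖ (Fin (m + 1) → R) := Submodule.map (e₁ : (Fin (m + 1) → R) →ₗ[Rᵐᵒᵖ] (Fin (m + 1) → R)) C with hC'def
    have hC'compl : IsCompl C' (Submodule.span Rᵐᵒᵖ {y}) := by
      have h1 := (Submodule.orderIsoMapComap e₁).isCompl hC
      rw [Submodule.orderIsoMapComap_apply, Submodule.orderIsoMapComap_apply] at h1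
      have h2 : Submodule.map (e₁ : (Fin (m + 1) → R) →ₗ[Rᵐᵒᵖ] (Fin (m + 1) → R)) (Submodule.span Rᵐᵒᵖ {x}) = Submodule.span Rᵐᵒᵖ {y} := by
        rw [Submodule.map_span, Set.image_singleton]
        have h3 : (e₁ : (Fin (m + 1) → R) → (Fin (m + 1) → R)) x = y := by
          show M₁.val.mulVec x = y
          exact hM₁x
        rw [LinearEquiv.coe_coe, h3]
      rw [h2] at h1
      exact h1
    have hy' := hy
    obtain ⟨ψ, hψ⟩ := hy'
    obtain ⟨δC, hδC1, hδC0, hδCmem, hδCcrit⟩ := compl_functional C' y hC'compl ψ hψ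
    obtain ⟨δD, hδD1, hδD0, hδDmem, hδDcrit⟩ := compl_functional D y hD ψ hψ
    set g : Fin (m + 1) → R :=
      fun j => δC (Pi.single j 1) - δD (Pi.single j 1) with hg
    have hgv : ∀ v, ∑ j, g j * v j = δC v - δD v := by
      intro v
      rw [lin_expand δC v, lin_expand δD v, ← Finset.sum_sub_distrib]
      refine Finset.sum_congr rfl fun j _ => ?_
      simp only [hg]
      rw [sub_mul]
    have hgy : ∑ j, g j * y j = 0 := by rw [hgv, hδC1, hδD1, sub_self]
    have hCD' : ∀ c ∈ C', ∃ d ∈ D, ∀ i, c i - d i ∈ q := by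
      intro c hc
      obtain ⟨u0, hu0, rfl⟩ := Submodule.mem_map.mp hc
      have himg : (fun i => ((u0 i : R) : q.ringCon.Quotient))
          ∈ (fun (u : Fin (m + 1) → R) (i : Fin (m + 1)) => (u i : q.ringCon.Quotient)) ''
            (D : Set (Fin (m + 1) → R)) := by
        rw [← hCD]
        exact ⟨u0, hu0, rfl⟩
      obtain ⟨d, hd, hde⟩ := himg
      refine ⟨d, hd, fun i => ?_⟩
      have h1 : (e₁ u0) i - u0 i ∈ q := CES_mulVec_congruent q M₁ hM₁CES u0 i
      have h2 : u0 i - d i ∈ q := by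
        have h3 := (quot_eq_iff q _ _).mp (congrFun hde i)
        have h4 := q.neg_mem h3
        rwa [neg_sub] at h4
      have h5 : (e₁ u0) i - d i = ((e₁ u0) i - u0 i) + (u0 i - d i) := by abel
      rw [LinearEquiv.coe_coe, h5]
      exact q.add_mem h1 h2
    have hgq : ∀ j, g j ∈ q := by
      intro j
      have hc : Pi.single j 1 - MulOpposite.op (δC (Pi.single j 1)) • y ∈ C' :=
        hδCmem (Pi.single j 1)
      have hδDv : δD (Pi.single j 1)
          = δD (Pi.single j 1 - MulOpposite.op (δC (Pi.single j 1)) • y)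
            + δC (Pi.single j 1) := by
        conv_lhs => rw [show (Pi.single j 1 : Fin (m + 1) → R)
          = (Pi.single j 1 - MulOpposite.op (δC (Pi.single j 1)) • y)
            + MulOpposite.op (δC (Pi.single j 1)) • y from (sub_add_cancel _ _).symm]
        rw [map_add, LinearMap.map_smul, hδD1, op_smul_eq, one_mul, MulOpposite.unop_op]
      obtain ⟨d, hd, hcd⟩ := hCD' _ hc
      have hδDc : δD (Pi.single j 1 - MulOpposite.op (δC (Pi.single j 1)) • y) ∈ q := by
        have h1 : δD (Pi.single j 1 - MulOpposite.op (δC (Pi.single j 1)) • y)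
            = δD ((Pi.single j 1 - MulOpposite.op (δC (Pi.single j 1)) • y) - d)
              + δD d := by
          conv_rhs => rw [map_sub, sub_add_cancel]
        rw [h1, hδD0 d hd, add_zero, lin_expand δD]
        exact q_sum_mem q _ _ fun i _ => q.mul_mem_left _ _ (hcd i)
      have hgj : g j = -δD (Pi.single j 1 - MulOpposite.op (δC (Pi.single j 1)) • y) := by
        simp only [hg]
        rw [hδDv]
        abel
      rw [hgj]
      exact q.neg_mem hδDc
    obtain ⟨T, hTCES, hTmv, hTinvmv⟩ := transvection_CES R r m q hSR hm hm1 y hy g hgq hgy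
    have hTy : T.val.mulVec y = y := by
      funext k
      rw [hTmv, hgy, mul_zero, add_zero]
    refine ⟨T * M₁, Subgroup.mul_mem _ hTCES hM₁CES, ?_, ?_⟩
    · rw [Units.val_mul, ← Matrix.mulVec_mulVec, hM₁x, hTy]
    · have hcomp : (fun u : Fin (m + 1) → R => (T * M₁).val.mulVec u)
          = (fun u : Fin (m + 1) → R => T.val.mulVec u)
            ∘ (fun u : Fin (m + 1) → R => M₁.val.mulVec u) := by
        funext u
        show (T * M₁).val.mulVec u = T.val.mulVec (M₁.val.mulVec u)
        rw [Units.val_mul, ← Matrix.mulVec_mulVec]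
      rw [hcomp, Set.image_comp]
      have hC'set : (fun u : Fin (m + 1) → R => M₁.val.mulVec u) '' (C : Set _)
          = (C' : Set (Fin (m + 1) → R)) := by
        rw [hC'def, Submodule.map_coe]
        rfl
      rw [hC'set]
      ext v
      constructor
      · rintro ⟨c, hc, rfl⟩
        have hcC' : c ∈ C' := hc
        have hs : ∑ j, g j * c j = -δD c := by
          rw [hgv, hδC0 c hcC', zero_sub]
        show T.val.mulVec c ∈ D
        apply hδDcrit
        have h1 : T.val.mulVec c = c + MulOpposite.op (∑ j, g j * c j) • y := by
          funext k
          rw [hTmv]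
          rfl
        rw [h1, map_add, LinearMap.map_smul, hδD1, op_smul_eq, one_mul,
          MulOpposite.unop_op, hs]
        abel
      · intro hv
        have hvD : v ∈ D := hv
        refine ⟨(T⁻¹).val.mulVec v, ?_, ?_⟩
        · show (T⁻¹).val.mulVec v ∈ C'
          apply hδCcrit
          have hs : ∑ j, g j * v j = δC v := by
            rw [hgv, hδD0 v hvD, sub_zero]
          have h1 : (T⁻¹).val.mulVec v = v - MulOpposite.op (∑ j, g j * v j) • y := by
            funext k
            rw [hTinvmv]
            rfl
          rw [h1, map_sub, LinearMap.map_smul, hδC1, op_smul_eq, one_mul,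
            MulOpposite.unop_op, hs, sub_self]
        · show T.val.mulVec ((T⁻¹).val.mulVec v) = v
          rw [Matrix.mulVec_mulVec]
          norm_cast
          rw [mul_inv_cancel]
          exact Matrix.one_mulVec v
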